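/- Single blocked node local detour (Lemma: if there is a hole comprising a single blocked node n_b, there always exists a path from node n_b−1 to node n_b+1 passing only through edge-connected neighbours of the blocked node): for every N ≥ 1 and every index n_b with 1 ≤ n_b ≤ 4^N−2, there exists a finite sequence c_0, c_1, ..., c_k of points of the grid {0,...,2^N−1} × {0,...,2^N−1} with c_0 = h_N(n_b−1) and c_k = h_N(n_b+1), such that every c_j is edge connected to h_N(n_b) (in particular no c_j equals h_N(n_b)), and for every j < k the points c_j and c_{j+1} are either edge connected or vertex connected. -/

import Mathlib

/-- The `N`-th order approximated Hilbert curve, mapping indices `{0,...,4^N-1}`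
to nodes of the grid `{0,...,2^N-1} × {0,...,2^N-1} ⊆ ℤ × ℤ`. -/
def hilbert : ℕ → ℕ → ℤ × ℤ
  | 0, _ => (0, 0)
  | 1, i =>
    if i = 0 then (0, 0)
    else if i = 1 then (0, 1)
    else if i = 2 then (1, 1)
    else (1, 0)
  | N + 2, i =>
    let q := i / 4 ^ (N + 1)
    let s : ℤ := 2 ^ (N + 1)
    let p := hilbert (N + 1) (i % 4 ^ (N + 1))
    if q = 0 then (p.2, p.1)
    else if q = 1 then (p.1, p.2 + s)
    else if q = 2 then (p.1 + s, p.2 + s)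
    else (2 * s - 1 - p.2, s - 1 - p.1)

/-- Euclidean distance between two points of `ℤ × ℤ`. -/
noncomputable def euclDist (a b : ℤ × ℤ) : ℝ :=
  Real.sqrt (((a.1 - b.1 : ℤ) : ℝ) ^ 2 + ((a.2 - b.2 : ℤ) : ℝ) ^ 2)

/-- Two points of `ℤ × ℤ` are edge connected if their Euclidean distance equals 1. -/
def EdgeConnected (a b : ℤ × ℤ) : Prop := euclDist a b = 1

/-- Two points of `ℤ × ℤ` are vertex connected if both coordinates differ by exactly 1. -/
def VertexConnected (a b : ℤ × ℤ) : Prop := |a.1 - b.1| = 1 ∧ |a.2 - b.2| = 1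

/-- Membership in the grid `{0,...,2^N-1} × {0,...,2^N-1}`. -/
def InGrid (N : ℕ) (p : ℤ × ℤ) : Prop :=
  0 ≤ p.1 ∧ p.1 ≤ 2 ^ N - 1 ∧ 0 ≤ p.2 ∧ p.2 ≤ 2 ^ N - 1

/-- The closed segment from `u` to `v` (centres of cells, viewed in `ℝ²`) is disjoint
from the open unit cell centred at `c`. -/
def SegAvoidsCell (u v c : ℤ × ℤ) : Prop :=
  ∀ t : ℝ, t ∈ Set.Icc (0 : ℝ) 1 →
    ¬ (|(1 - t) * (u.1 : ℝ) + t * (v.1 : ℝ) - (c.1 : ℝ)| < 1 / 2 ∧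
       |(1 - t) * (u.2 : ℝ) + t * (v.2 : ℝ) - (c.2 : ℝ)| < 1 / 2)

/-- An evasion tour for the blocked index set `B` on the `N`-th order Hilbert grid:
a sequence of waypoints `w 0, ..., w m` in the grid, starting at the entry node,
ending at the exit node, avoiding all blocked nodes, covering every unblocked grid
point, and whose straight-line segments avoid the interiors of all blocked cells. -/
def IsEvasionTour (N : ℕ) (B : Finset ℕ) (m : ℕ) (w : ℕ → ℤ × ℤ) : Prop :=
  w 0 = hilbert N 0 ∧
  w m = hilbert N (4 ^ N - 1) ∧
  (∀ j ≤ m, InGrid N (w j)) ∧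
  (∀ j ≤ m, ∀ b ∈ B, w j ≠ hilbert N b) ∧
  (∀ p : ℤ × ℤ, InGrid N p → (∀ b ∈ B, p ≠ hilbert N b) → ∃ j ≤ m, w j = p) ∧
  (∀ j < m, ∀ b ∈ B, SegAvoidsCell (w j) (w (j + 1)) (hilbert N b))

lemma hilbert_two_step (N i : ℕ) :
    hilbert (N + 2) i =
      (if i / 4^(N+1) = 0 then ((hilbert (N+1) (i % 4^(N+1))).2, (hilbert (N+1) (i % 4^(N+1))).1)
       else if i / 4^(N+1) = 1 then ((hilbert (N+1) (i % 4^(N+1))).1, (hilbert (N+1) (i % 4^(N+1))).2 + 2^(N+1))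
       else if i / 4^(N+1) = 2 then ((hilbert (N+1) (i % 4^(N+1))).1 + 2^(N+1), (hilbert (N+1) (i % 4^(N+1))).2 + 2^(N+1))
       else (2 * 2^(N+1) - 1 - (hilbert (N+1) (i % 4^(N+1))).2, 2^(N+1) - 1 - (hilbert (N+1) (i % 4^(N+1))).1)) := rfl

lemma hilbert_mem_grid : ∀ N i, InGrid N (hilbert N i) := by
  intro N
  induction N with
  | zero => intro i; simp [hilbert, InGrid]
  | succ n ih =>
    intro i
    match n, ih with
    | 0, _ =>
      show InGrid 1 (hilbert 1 i)
      simp only [hilbert]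
      split_ifs <;> simp [InGrid]
    | m+1, ih =>
      obtain ⟨g1, g2, g3, g4⟩ := ih (i % 4 ^ (m+1))
      have hs : (2:ℤ)^(m+1+1) = 2 * 2^(m+1) := by ring
      rw [hilbert_two_step]
      split_ifs <;> exact ⟨by dsimp; omega, by dsimp; omega, by dsimp; omega, by dsimp; omega⟩

def Adj (a b : ℤ × ℤ) : Prop :=
  (|a.1 - b.1| = 1 ∧ a.2 = b.2) ∨ (a.1 = b.1 ∧ |a.2 - b.2| = 1)

lemma hilbert_zero : ∀ N, hilbert N 0 = (0, 0) := by
  intro N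
  induction N with
  | zero => rfl
  | succ n ih =>
    match n, ih with
    | 0, _ => rfl
    | m+1, ih =>
      rw [hilbert_two_step]
      simp [Nat.zero_div, Nat.zero_mod, ih]

lemma hilbert_last : ∀ N, 1 ≤ N → hilbert N (4 ^ N - 1) = (2 ^ N - 1, 0) := by
  intro N
  induction N with
  | zero => omega
  | succ n ih =>
    intro _
    match n, ih with
    | 0, _ => rfl
    | m+1, ih =>
      have hM : 0 < 4 ^ (m+1) := Nat.pow_pos (by norm_num)
      have h4 : 4 ^ (m+1+1) = 4 * 4 ^ (m+1) := by ring
      have hq : (4 ^ (m+1+1) - 1) / 4 ^ (m+1) = 3 := by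
        rw [h4]
        rw [show 4 * 4^(m+1) - 1 = 4^(m+1) * 3 + (4^(m+1) - 1) by omega]
        rw [Nat.mul_add_div hM, Nat.div_eq_of_lt (by omega)]
      have hr : (4 ^ (m+1+1) - 1) % 4 ^ (m+1) = 4 ^ (m+1) - 1 := by
        rw [h4]
        rw [show 4 * 4^(m+1) - 1 = 4^(m+1) * 3 + (4^(m+1) - 1) by omega]
        rw [Nat.mul_add_mod, Nat.mod_eq_of_lt (by omega)]
      rw [hilbert_two_step, hq, hr, ih (by omega)]
      have hs : (2:ℤ)^(m+1+1) = 2 * 2^(m+1) := by ring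
      norm_num
      ring_nf

lemma abs_one_iff (x : ℤ) : |x| = 1 ↔ x = 1 ∨ x = -1 := abs_eq one_pos.le

lemma hilbert_adj : ∀ N i, 1 ≤ N → i + 1 < 4 ^ N → Adj (hilbert N i) (hilbert N (i + 1)) := by
  intro N
  induction N with
  | zero => omega
  | succ n ih =>
    intro i _ hi
    match n, ih with
    | 0, _ =>
      have h3 : i < 3 := by norm_num at hi; omega
      interval_cases i <;> simp [hilbert, Adj]
    | m+1, ih =>
      have hM : 0 < 4 ^ (m+1) := Nat.pow_pos (by norm_num)
      have h4 : 4 ^ (m+1+1) = 4 * 4 ^ (m+1) := by ring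
      have hdiv := Nat.div_add_mod i (4 ^ (m+1))
      have hrlt : i % 4 ^ (m+1) < 4 ^ (m+1) := Nat.mod_lt _ hM
      have hqlt : i / 4 ^ (m+1) < 4 := by
        rw [Nat.div_lt_iff_lt_mul hM]; omega
      by_cases hcross : i % 4 ^ (m+1) + 1 < 4 ^ (m+1)
      · -- same quadrant
        have hq' : (i+1) / 4 ^ (m+1) = i / 4 ^ (m+1) := by
          rw [show i + 1 = 4 ^ (m+1) * (i / 4 ^ (m+1)) + (i % 4 ^ (m+1) + 1) by omega,
            Nat.mul_add_div hM, Nat.div_eq_of_lt hcross, Nat.add_zero]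
        have hr' : (i+1) % 4 ^ (m+1) = i % 4 ^ (m+1) + 1 := by
          rw [show i + 1 = 4 ^ (m+1) * (i / 4 ^ (m+1)) + (i % 4 ^ (m+1) + 1) by omega,
            Nat.mul_add_mod, Nat.mod_eq_of_lt hcross]
        have hadj := ih (i % 4 ^ (m+1)) (by omega) (by omega)
        rw [hilbert_two_step, hilbert_two_step, hq', hr']
        simp only [Adj, abs_one_iff] at hadj ⊢
        split_ifs <;> omega
      · -- crossing a quadrant boundary
        have hr1 : i % 4 ^ (m+1) = 4 ^ (m+1) - 1 := by omega
        have hq3 : i / 4 ^ (m+1) ≤ 2 := by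
          by_contra h
          have hq3' : i / 4 ^ (m+1) = 3 := by omega
          have hmul : 4 ^ (m+1) * (i / 4 ^ (m+1)) = 4 ^ (m+1) * 3 := by rw [hq3']
          omega
        have hq' : (i+1) / 4 ^ (m+1) = i / 4 ^ (m+1) + 1 := by
          rw [show i + 1 = 4 ^ (m+1) * (i / 4 ^ (m+1)) + 4 ^ (m+1) by omega,
            Nat.mul_add_div hM, Nat.div_self hM]
        have hr' : (i+1) % 4 ^ (m+1) = 0 := by
          rw [show i + 1 = 4 ^ (m+1) * (i / 4 ^ (m+1)) + 4 ^ (m+1) by omega,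
            Nat.mul_add_mod, Nat.mod_self]
        have hlast : hilbert (m+1) (i % 4 ^ (m+1)) = (2 ^ (m+1) - 1, 0) := by
          rw [hr1]; exact hilbert_last (m+1) (by omega)
        rw [hilbert_two_step, hilbert_two_step, hq', hr', hlast, hilbert_zero]
        have hq0 : i / 4 ^ (m+1) = 0 ∨ i / 4 ^ (m+1) = 1 ∨ i / 4 ^ (m+1) = 2 := by
          revert hq3; generalize i / 4 ^ (m+1) = q; intro h; omega
        rcases hq0 with h | h | h <;> rw [h] <;>
          simp only [Adj, abs_one_iff] <;> norm_num <;> omega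

lemma adj_edge {a b : ℤ × ℤ} (h : Adj a b) : EdgeConnected a b := by
  unfold EdgeConnected euclDist
  rcases h with ⟨h1, h2⟩ | ⟨h1, h2⟩
  · rw [abs_one_iff] at h1
    rcases h1 with h1 | h1 <;> rw [h1, h2] <;> push_cast <;> norm_num
  · rw [abs_one_iff] at h2
    rcases h2 with h2 | h2 <;> rw [h1, h2] <;> push_cast <;> norm_num

theorem hilbert_single_blocked_local_detour (N nb : ℕ) (hN : 1 ≤ N) (h1 : 1 ≤ nb)
    (h2 : nb ≤ 4 ^ N - 2) :
    ∃ (k : ℕ) (c : ℕ → ℤ × ℤ),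
      c 0 = hilbert N (nb - 1) ∧
      c k = hilbert N (nb + 1) ∧
      (∀ j ≤ k, InGrid N (c j)) ∧
      (∀ j ≤ k, EdgeConnected (c j) (hilbert N nb)) ∧
      (∀ j < k, EdgeConnected (c j) (c (j + 1)) ∨ VertexConnected (c j) (c (j + 1))) := by
  have h4N : 4 ≤ 4 ^ N := by
    calc (4:ℕ) = 4 ^ 1 := by norm_num
    _ ≤ 4 ^ N := Nat.pow_le_pow_right (by norm_num) hN
  set a := hilbert N (nb - 1) with hadef
  set b := hilbert N nb with hbdef
  set d := hilbert N (nb + 1) with hddef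
  have hab : Adj a b := by
    have := hilbert_adj N (nb - 1) hN (by omega)
    rwa [show nb - 1 + 1 = nb by omega] at this
  have hbd : Adj b d := hilbert_adj N nb hN (by omega)
  have hga : InGrid N a := hilbert_mem_grid N _
  have hgb : InGrid N b := hilbert_mem_grid N _
  have hgd : InGrid N d := hilbert_mem_grid N _
  have h2N : (2:ℤ) ≤ 2 ^ N := by
    calc (2:ℤ) = 2 ^ 1 := by norm_num
    _ ≤ 2 ^ N := pow_le_pow_right₀ (by norm_num) hN
  obtain ⟨hga1, hga2, hga3, hga4⟩ := hga
  obtain ⟨hgb1, hgb2, hgb3, hgb4⟩ := hgb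
  obtain ⟨hgd1, hgd2, hgd3, hgd4⟩ := hgd
  by_cases had : a = d
  · -- trivial: a = d, constant path
    refine ⟨0, fun _ => a, rfl, by rw [had], ?_, ?_, ?_⟩
    · intro j hj; exact ⟨hga1, hga2, hga3, hga4⟩
    · intro j hj; exact adj_edge hab
    · intro j hj; omega
  · rcases hab with ⟨ha1, ha2⟩ | ⟨ha1, ha2⟩ <;> rcases hbd with ⟨hd1, hd2⟩ | ⟨hd1, hd2⟩
    · -- a,d both horizontal neighbours of b, opposite sides
      rw [abs_one_iff] at ha1 hd1
      have hbd2 : b.2 = d.2 := hd2.symm ▸ rfl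
      -- intermediate point e above or below b
      by_cases hup : b.2 + 1 ≤ 2 ^ N - 1
      · refine ⟨2, fun j => if j = 0 then a else if j = 1 then (b.1, b.2 + 1) else d,
          by norm_num, by norm_num, ?_, ?_, ?_⟩
        · intro j hj; interval_cases j <;> simp <;>
            exact ⟨by omega, by omega, by omega, by omega⟩
        · intro j hj; interval_cases j <;> simp <;> apply adj_edge
          · exact Or.inl ⟨by rw [abs_one_iff]; omega, ha2⟩
          · exact Or.inr ⟨rfl, by rw [abs_one_iff]; omega⟩
          · exact Or.inl ⟨by rw [abs_one_iff]; omega, hd2.symm⟩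
        · intro j hj; interval_cases j <;> simp <;> right <;>
            constructor <;> rw [abs_one_iff] <;> simp <;> omega
      · refine ⟨2, fun j => if j = 0 then a else if j = 1 then (b.1, b.2 - 1) else d,
          by norm_num, by norm_num, ?_, ?_, ?_⟩
        · intro j hj; interval_cases j <;> simp <;>
            exact ⟨by omega, by omega, by omega, by omega⟩
        · intro j hj; interval_cases j <;> simp <;> apply adj_edge
          · exact Or.inl ⟨by rw [abs_one_iff]; omega, ha2⟩
          · exact Or.inr ⟨rfl, by rw [abs_one_iff]; omega⟩
          · exact Or.inl ⟨by rw [abs_one_iff]; omega, hd2.symm⟩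
        · intro j hj; interval_cases j <;> simp <;> right <;>
            constructor <;> rw [abs_one_iff] <;> simp <;> omega
    · -- a horizontal, d vertical: direct diagonal step
      rw [abs_one_iff] at ha1 hd2
      refine ⟨1, fun j => if j = 0 then a else d, by norm_num, by norm_num, ?_, ?_, ?_⟩
      · intro j hj; interval_cases j <;> simp <;>
          exact ⟨by omega, by omega, by omega, by omega⟩
      · intro j hj; interval_cases j <;> simp <;> apply adj_edge
        · exact Or.inl ⟨by rw [abs_one_iff]; omega, ha2⟩
        · exact Or.inr ⟨hd1.symm, by rw [abs_one_iff]; omega⟩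
      · intro j hj; interval_cases j; simp; right
        exact ⟨by rw [abs_one_iff]; omega, by rw [abs_one_iff]; omega⟩
    · -- a vertical, d horizontal
      rw [abs_one_iff] at ha2 hd1
      refine ⟨1, fun j => if j = 0 then a else d, by norm_num, by norm_num, ?_, ?_, ?_⟩
      · intro j hj; interval_cases j <;> simp <;>
          exact ⟨by omega, by omega, by omega, by omega⟩
      · intro j hj; interval_cases j <;> simp <;> apply adj_edge
        · exact Or.inr ⟨ha1, by rw [abs_one_iff]; omega⟩
        · exact Or.inl ⟨by rw [abs_one_iff]; omega, hd2.symm⟩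
      · intro j hj; interval_cases j; simp; right
        exact ⟨by rw [abs_one_iff]; omega, by rw [abs_one_iff]; omega⟩
    · -- a,d both vertical neighbours of b, opposite sides
      rw [abs_one_iff] at ha2 hd2
      by_cases hup : b.1 + 1 ≤ 2 ^ N - 1
      · refine ⟨2, fun j => if j = 0 then a else if j = 1 then (b.1 + 1, b.2) else d,
          by norm_num, by norm_num, ?_, ?_, ?_⟩
        · intro j hj; interval_cases j <;> simp <;>
            exact ⟨by omega, by omega, by omega, by omega⟩
        · intro j hj; interval_cases j <;> simp <;> apply adj_edge
          · exact Or.inr ⟨ha1, by rw [abs_one_iff]; omega⟩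
          · exact Or.inl ⟨by rw [abs_one_iff]; omega, rfl⟩
          · exact Or.inr ⟨hd1.symm, by rw [abs_one_iff]; omega⟩
        · intro j hj; interval_cases j <;> simp <;> right <;>
            constructor <;> rw [abs_one_iff] <;> simp <;> omega
      · refine ⟨2, fun j => if j = 0 then a else if j = 1 then (b.1 - 1, b.2) else d,
          by norm_num, by norm_num, ?_, ?_, ?_⟩
        · intro j hj; interval_cases j <;> simp <;>
            exact ⟨by omega, by omega, by omega, by omega⟩
        · intro j hj; interval_cases j <;> simp <;> apply adj_edge
          · exact Or.inr ⟨ha1, by rw [abs_one_iff]; omega⟩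
          · exact Or.inl ⟨by rw [abs_one_iff]; omega, rfl⟩
          · exact Or.inr ⟨hd1.symm, by rw [abs_one_iff]; omega⟩
        · intro j hj; interval_cases j <;> simp <;> right <;>
            constructor <;> rw [abs_one_iff] <;> simp <;> omega
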